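/- arXiv:1801.10416 — 2 statements merged into one kernel-verified Lean document; each statement's English description precedes it below -/
import Mathlib

section
/- Let φ be a 3-CNF formula with variables x_1,…,x_η and clauses c_1,…,c_μ, and let G_φ with its clustering and source s be the associated CluBFS instance. If φ is not satisfiable, then every clustered spanning tree T of G_φ rooted at s satisfies cost(T) ≥ 3η + 8μ + 3. -/
open SimpleGraph

inductive SatVtx (η μ : ℕ) where
  | s : SatVtx η μ
  | pos : Fin η → SatVtx η μ
  | neg : Fin η → SatVtx η μ
  | cl : Fin μ → Fin 3 → SatVtx η μ
  deriving DecidableEq, Fintype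

def satRel {η μ : ℕ} (φ : Fin μ → Fin 3 → Fin η × Bool) :
    SatVtx η μ → SatVtx η μ → Prop
  | .s, .pos _ => True
  | .s, .neg _ => True
  | .pos i, .neg i' => i = i'
  | .cl j k, .cl j' k' => j = j' ∧ k ≠ k'
  | .cl j k, .pos i => φ j k = (i, true)
  | .cl j k, .neg i => φ j k = (i, false)
  | _, _ => False

def satGraph {η μ : ℕ} (φ : Fin μ → Fin 3 → Fin η × Bool) : SimpleGraph (SatVtx η μ) :=
  SimpleGraph.fromRel (satRel φ)

def IsCST {V : Type*} (G : SimpleGraph V) (𝒞 : Set (Set V)) (T : SimpleGraph V) : Prop :=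
  T ≤ G ∧ T.IsTree ∧ ∀ C ∈ 𝒞, (T.induce C).Connected

def satClusters (η μ : ℕ) : Set (Set (SatVtx η μ)) :=
  {{SatVtx.s}} ∪ {S | ∃ i, S = {SatVtx.pos i, SatVtx.neg i}} ∪
    {S | ∃ j, S = {x | ∃ k, x = SatVtx.cl j k}}




section TreeLemmas
variable {V : Type*} [DecidableEq V] {T : SimpleGraph V} {s x y a b c : V}

lemma dist_lt_aux (p : T.Walk s x) (hp : p.length = T.dist s x) (hy : y ∈ p.support)
    (hne : y ≠ x) : T.dist s y < T.dist s x := by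
  have h1 : T.dist s y ≤ (p.takeUntil y hy).length := SimpleGraph.dist_le _
  have h2 : (p.takeUntil y hy).length + (p.dropUntil y hy).length = p.length := by
    rw [← SimpleGraph.Walk.length_append, SimpleGraph.Walk.take_spec]
  have h3 : (p.dropUntil y hy).length ≠ 0 := fun h0 =>
    hne (SimpleGraph.Walk.eq_of_length_eq_zero h0)
  omega

lemma adj_dist (ht : T.IsTree) (h : T.Adj x y) :
    T.dist s y = T.dist s x + 1 ∨ T.dist s x = T.dist s y + 1 := by
  have hconn := ht.isConnected
  obtain ⟨p, hp⟩ := hconn.exists_walk_length_eq_dist s x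
  have hpath : p.IsPath := p.isPath_of_length_eq_dist hp
  by_cases hy : y ∈ p.support
  · right
    have h1 : T.dist s y < T.dist s x := dist_lt_aux p hp hy h.ne'
    have h2 : T.dist s x ≤ T.dist s y + T.dist y x := hconn.dist_triangle
    have h3 : T.dist y x = 1 := SimpleGraph.dist_eq_one_iff_adj.mpr h.symm
    omega
  · left
    have hqpath : (SimpleGraph.Walk.cons h.symm p.reverse).IsPath := by
      refine hpath.reverse.cons ?_
      rw [SimpleGraph.Walk.support_reverse, List.mem_reverse]
      exact hy
    obtain ⟨r, hr⟩ := hconn.exists_walk_length_eq_dist s y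
    have hrpath : r.IsPath := r.isPath_of_length_eq_dist hr
    have huniq := SimpleGraph.isAcyclic_iff_path_unique.mp ht.IsAcyclic
      (⟨_, hqpath⟩ : T.Path y s) ⟨r.reverse, hrpath.reverse⟩
    have hlen := congrArg (fun q : T.Path y s => q.1.length) huniq
    simp only [SimpleGraph.Walk.length_cons, SimpleGraph.Walk.length_reverse] at hlen
    omega

lemma exists_parent (hconn : T.Connected) (hx : x ≠ s) :
    ∃ y, T.Adj x y ∧ T.dist s y + 1 = T.dist s x := by
  obtain ⟨p, hp⟩ := hconn.exists_walk_length_eq_dist s x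
  cases hrev : p.reverse with
  | nil =>
    exact absurd (SimpleGraph.Walk.eq_of_length_eq_zero (p := p.reverse)
      (by rw [hrev]; rfl)) hx
  | cons h q =>
    rename_i z
    refine ⟨z, h, ?_⟩
    have hlen : q.length + 1 = p.length := by
      have := congrArg SimpleGraph.Walk.length hrev
      rw [SimpleGraph.Walk.length_reverse] at this
      simpa [Nat.add_comm] using this.symm
    have h1 : T.dist s z ≤ q.reverse.length := SimpleGraph.dist_le _
    rw [SimpleGraph.Walk.length_reverse] at h1
    have h2 : T.dist s x ≤ T.dist s z + T.dist z x := hconn.dist_triangle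
    have h3 : T.dist z x = 1 := SimpleGraph.dist_eq_one_iff_adj.mpr h.symm
    omega

lemma parent_unique (ht : T.IsTree) (h1 : T.Adj a b) (h2 : T.Adj c b)
    (hd1 : T.dist s a + 1 = T.dist s b) (hd2 : T.dist s c + 1 = T.dist s b) : a = c := by
  have hconn := ht.isConnected
  obtain ⟨pa, hpa⟩ := hconn.exists_walk_length_eq_dist s a
  obtain ⟨pc, hpc⟩ := hconn.exists_walk_length_eq_dist s c
  have hba : b ∉ pa.support := fun hb =>
    absurd (dist_lt_aux pa hpa hb h1.ne') (by omega)
  have hbc : b ∉ pc.support := fun hb =>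
    absurd (dist_lt_aux pc hpc hb h2.ne') (by omega)
  have hqa : (SimpleGraph.Walk.cons h1.symm pa.reverse).IsPath := by
    refine (pa.isPath_of_length_eq_dist hpa).reverse.cons ?_
    rw [SimpleGraph.Walk.support_reverse, List.mem_reverse]; exact hba
  have hqc : (SimpleGraph.Walk.cons h2.symm pc.reverse).IsPath := by
    refine (pc.isPath_of_length_eq_dist hpc).reverse.cons ?_
    rw [SimpleGraph.Walk.support_reverse, List.mem_reverse]; exact hbc
  have huniq := SimpleGraph.isAcyclic_iff_path_unique.mp ht.IsAcyclic
    (⟨_, hqa⟩ : T.Path b s) ⟨_, hqc⟩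
  have hsup := congrArg (fun q : T.Path b s => q.1.support.tail.head?) huniq
  simp only [SimpleGraph.Walk.support_cons, List.tail_cons] at hsup
  rw [SimpleGraph.Walk.support_eq_cons pa.reverse,
    SimpleGraph.Walk.support_eq_cons pc.reverse] at hsup
  simpa using hsup

lemma induce_first_step {C : Set V} {hx : x ∈ C} {hy : y ∈ C}
    (h : (T.induce C).Reachable ⟨x, hx⟩ ⟨y, hy⟩) (hxy : x ≠ y) :
    ∃ v ∈ C, T.Adj x v := by
  obtain ⟨w⟩ := h
  cases w with
  | nil => exact absurd rfl hxy
  | cons h q =>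
    rename_i v
    exact ⟨v.1, v.2, by simpa using h⟩
end TreeLemmas


def satEquiv (η μ : ℕ) : SatVtx η μ ≃ (Unit ⊕ Fin η ⊕ Fin η ⊕ Fin μ × Fin 3) where
  toFun v := match v with
    | .s => Sum.inl ()
    | .pos i => Sum.inr (Sum.inl i)
    | .neg i => Sum.inr (Sum.inr (Sum.inl i))
    | .cl j k => Sum.inr (Sum.inr (Sum.inr (j, k)))
  invFun x := match x with
    | Sum.inl _ => .s
    | Sum.inr (Sum.inl i) => .pos i
    | Sum.inr (Sum.inr (Sum.inl i)) => .neg i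
    | Sum.inr (Sum.inr (Sum.inr (j, k))) => .cl j k
  left_inv v := by cases v <;> rfl
  right_inv x := by rcases x with _ | (i | (i | ⟨j, k⟩)) <;> rfl

lemma sum_satVtx {η μ : ℕ} (F : SatVtx η μ → ℕ) :
    ∑ v, F v = F .s + ((∑ i, F (.pos i)) + ((∑ i, F (.neg i)) +
      ∑ j, ∑ k, F (.cl j k))) := by
  rw [← Equiv.sum_comp (satEquiv η μ).symm F]
  simp [Fintype.sum_sum_type, Fintype.sum_prod_type, satEquiv]

lemma satAdj_cl {η μ : ℕ} {φ : Fin μ → Fin 3 → Fin η × Bool} {j : Fin μ} {k : Fin 3}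
    {y : SatVtx η μ} (h : (satGraph φ).Adj (.cl j k) y) :
    (∃ k', k' ≠ k ∧ y = .cl j k') ∨
      (∃ i, φ j k = (i, true) ∧ y = .pos i) ∨
      (∃ i, φ j k = (i, false) ∧ y = .neg i) := by
  rw [satGraph, SimpleGraph.fromRel_adj] at h
  obtain ⟨hne, h | h⟩ := h
  · cases y with
    | s => simp [satRel] at h
    | pos i => exact Or.inr (Or.inl ⟨i, h, rfl⟩)
    | neg i => exact Or.inr (Or.inr ⟨i, h, rfl⟩)
    | cl j' k' =>
      obtain ⟨rfl, hkk⟩ := h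
      exact Or.inl ⟨k', fun e => hkk e.symm, rfl⟩
  · cases y with
    | s => simp [satRel] at h
    | pos i => simp [satRel] at h
    | neg i => simp [satRel] at h
    | cl j' k' =>
      obtain ⟨rfl, hkk⟩ := h
      exact Or.inl ⟨k', hkk, rfl⟩

theorem stmt1 (η μ : ℕ) (φ : Fin μ → Fin 3 → Fin η × Bool)
    (hunsat : ¬ ∃ a : Fin η → Bool, ∀ j, ∃ k, a (φ j k).1 = (φ j k).2) :
    ∀ T : SimpleGraph (SatVtx η μ), IsCST (satGraph φ) (satClusters η μ) T →
      3 * η + 8 * μ + 3 ≤ ∑ v, T.dist SatVtx.s v := by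
  classical
  intro T hT
  obtain ⟨hle, htree, hclus⟩ := hT
  have hconn := htree.isConnected
  have hfin3 : ∀ k k' : Fin 3, k ≠ k' → ∃ k'', k'' ≠ k ∧ k'' ≠ k' := by decide
  -- variable cluster edges
  have hvaradj : ∀ i : Fin η, T.Adj (.pos i) (.neg i) := by
    intro i
    have hC : ({SatVtx.pos i, SatVtx.neg i} : Set (SatVtx η μ)) ∈ satClusters η μ :=
      Or.inl (Or.inr ⟨i, rfl⟩)
    have hcon := hclus _ hC
    have hx : (SatVtx.pos i : SatVtx η μ) ∈ ({.pos i, .neg i} : Set _) := by simp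
    have hy : (SatVtx.neg i : SatVtx η μ) ∈ ({.pos i, .neg i} : Set _) := by simp
    obtain ⟨v, hv, hadj⟩ := induce_first_step (T := T) (hcon ⟨_, hx⟩ ⟨_, hy⟩) (by simp)
    simp only [Set.mem_insert_iff, Set.mem_singleton_iff] at hv
    rcases hv with rfl | rfl
    · exact absurd hadj (T.irrefl)
    · exact hadj
  have honeadj : ∀ i : Fin η, ¬(T.Adj .s (.pos i) ∧ T.Adj .s (.neg i)) := by
    rintro i ⟨h1, h2⟩
    have e1 : T.dist .s (.pos i) = 1 := SimpleGraph.dist_eq_one_iff_adj.mpr h1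
    have e2 : T.dist .s (.neg i) = 1 := SimpleGraph.dist_eq_one_iff_adj.mpr h2
    rcases adj_dist (s := SatVtx.s) htree (hvaradj i) with h | h <;> omega
  push_neg at hunsat
  obtain ⟨j0, hj0⟩ := hunsat (fun i => if T.Adj .s (.pos i) then true else false)
  have hpos1 : ∀ v : SatVtx η μ, v ≠ .s → 1 ≤ T.dist .s v := fun v hv =>
    hconn.pos_dist_of_ne (Ne.symm hv)
  have hvar3 : ∀ i, 3 ≤ T.dist .s (.pos i) + T.dist .s (.neg i) := by
    intro i
    have h1 := hpos1 (.pos i) (by simp)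
    have h2 := hpos1 (.neg i) (by simp)
    by_cases e1 : T.dist .s (.pos i) = 1
    · have e2 : T.dist .s (.neg i) ≠ 1 := fun e2 =>
        honeadj i ⟨SimpleGraph.dist_eq_one_iff_adj.mp e1, SimpleGraph.dist_eq_one_iff_adj.mp e2⟩
      omega
    · omega
  have hlit1 : ∀ (j : Fin μ) (k : Fin 3),
      1 ≤ T.dist .s (if (φ j k).2 then SatVtx.pos (φ j k).1 else .neg (φ j k).1) := by
    intro j k; apply hpos1; split <;> simp
  have hlit2 : ∀ k, 2 ≤ T.dist .s
      (if (φ j0 k).2 then SatVtx.pos (φ j0 k).1 else .neg (φ j0 k).1) := by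
    intro k
    have hk := hj0 k
    rcases hb : (φ j0 k).2 with _ | _
    · -- literal is negative: a i ≠ false, so T.Adj s (pos i)
      rw [hb] at hk
      have hadj : T.Adj .s (.pos (φ j0 k).1) := by
        by_contra hna
        exact hk (by simp [hna])
      rw [if_neg (by simp)]
      have hne1 : T.dist .s (.neg (φ j0 k).1) ≠ 1 := fun e =>
        honeadj _ ⟨hadj, SimpleGraph.dist_eq_one_iff_adj.mp e⟩
      have := hpos1 (.neg (φ j0 k).1) (by simp)
      omega
    · rw [hb] at hk
      have hna : ¬ T.Adj .s (.pos (φ j0 k).1) := fun hadj => hk (by simp [hadj])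
      rw [if_pos rfl]
      have hne1 : T.dist .s (.pos (φ j0 k).1) ≠ 1 := fun e =>
        hna (SimpleGraph.dist_eq_one_iff_adj.mp e)
      have := hpos1 (.pos (φ j0 k).1) (by simp)
      omega
  -- clause cluster: if two clause vertices not adjacent, both adjacent to the third
  have hclause : ∀ (j : Fin μ) (k k' k'' : Fin 3), k ≠ k' → k'' ≠ k → k'' ≠ k' →
      ¬ T.Adj (.cl j k) (.cl j k') →
      T.Adj (.cl j k) (.cl j k'') ∧ T.Adj (.cl j k') (.cl j k'') := by
    intro j k k' k'' hkk' h1 h2 hna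
    have hC : {x | ∃ k, x = SatVtx.cl j k} ∈ satClusters η μ := Or.inr ⟨j, rfl⟩
    have hcon := hclus _ hC
    have hmem : ∀ k : Fin 3, (SatVtx.cl j k : SatVtx η μ) ∈ {x | ∃ k, x = SatVtx.cl j k} :=
      fun k => ⟨k, rfl⟩
    have huniq3 : ∀ p q r : Fin 3, p ≠ q → r ≠ p → r ≠ q →
        (∀ w : Fin 3, w ≠ p → w ≠ q → w = r) := by decide
    constructor
    · obtain ⟨v, hv, hadj⟩ := induce_first_step (T := T)
        (hcon ⟨_, hmem k⟩ ⟨_, hmem k'⟩) (by simp [hkk'])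
      obtain ⟨r, rfl⟩ := hv
      have hrk : r ≠ k := fun e => by subst e; exact T.irrefl hadj
      have hrk' : r ≠ k' := fun e => by subst e; exact hna hadj
      rwa [huniq3 k k' k'' hkk' h1 h2 r hrk hrk'] at hadj
    · obtain ⟨v, hv, hadj⟩ := induce_first_step (T := T)
        (hcon ⟨_, hmem k'⟩ ⟨_, hmem k⟩) (by simp [Ne.symm hkk'])
      obtain ⟨r, rfl⟩ := hv
      have hrk' : r ≠ k' := fun e => by subst e; exact T.irrefl hadj
      have hrk : r ≠ k := fun e => by subst e; exact hna hadj.symm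
      rwa [huniq3 k k' k'' hkk' h1 h2 r hrk hrk'] at hadj
  -- clause sum bound
  have hclparent : ∀ (j : Fin μ) (L : ℕ),
      (∀ k, L ≤ T.dist .s (if (φ j k).2 then SatVtx.pos (φ j k).1 else .neg (φ j k).1)) →
      3 * L + 5 ≤ ∑ k, T.dist .s (.cl j k) := by
    intro j L hL
    obtain ⟨k0, -, hmin0⟩ := Finset.exists_min_image Finset.univ
      (fun k => T.dist SatVtx.s (.cl j k)) ⟨0, Finset.mem_univ 0⟩
    have hmin : ∀ k, T.dist .s (.cl j k0) ≤ T.dist .s (.cl j k) :=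
      fun k => hmin0 k (Finset.mem_univ k)
    obtain ⟨y, hadj, hdy⟩ := exists_parent (s := SatVtx.s) hconn (x := SatVtx.cl j k0) (by simp)
    have hmL : L + 1 ≤ T.dist .s (.cl j k0) := by
      rcases satAdj_cl (hle hadj) with ⟨k', hk', rfl⟩ | ⟨i, hi, rfl⟩ | ⟨i, hi, rfl⟩
      · exact absurd (hmin k') (by omega)
      · have := hL k0; rw [hi] at this; simp at this; omega
      · have := hL k0; rw [hi] at this; simp at this; omega
    have huniqmin : ∀ k k', k ≠ k' →
        T.dist .s (.cl j k) = T.dist .s (.cl j k0) →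
        T.dist .s (.cl j k') = T.dist .s (.cl j k0) → False := by
      intro k k' hkk' e1 e2
      have hnadj : ¬ T.Adj (.cl j k) (.cl j k') := by
        intro hadj2
        rcases adj_dist (s := SatVtx.s) htree hadj2 with h | h <;> omega
      obtain ⟨k'', h1, h2⟩ := hfin3 k k' hkk'
      obtain ⟨ha1, ha2⟩ := hclause j k k' k'' hkk' h1 h2 hnadj
      have hge := hmin k''
      rcases adj_dist (s := SatVtx.s) htree ha1 with hd1 | hd1
      · rcases adj_dist (s := SatVtx.s) htree ha2 with hd2 | hd2
        · have := parent_unique (s := SatVtx.s) htree ha1 ha2 (by omega) (by omega)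
          simp only [SatVtx.cl.injEq] at this
          exact hkk' this.2
        · omega
      · omega
    have hker : ∀ k ∈ Finset.univ.erase k0,
        T.dist .s (.cl j k0) + 1 ≤ T.dist .s (.cl j k) := by
      intro k hk
      have hne := Finset.ne_of_mem_erase hk
      have h1 := hmin k
      rcases eq_or_lt_of_le h1 with e | e
      · exact ((huniqmin k k0 hne e.symm rfl).elim)
      · omega
    have hsum := Finset.add_sum_erase Finset.univ
      (fun k => T.dist SatVtx.s (.cl j k)) (Finset.mem_univ k0)
    have hers : (T.dist .s (.cl j k0) + 1) * 2 ≤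
        ∑ k ∈ Finset.univ.erase k0, T.dist SatVtx.s (.cl j k) := by
      have := Finset.card_nsmul_le_sum (Finset.univ.erase k0)
        (fun k => T.dist SatVtx.s (.cl j k)) (T.dist .s (.cl j k0) + 1) hker
      have hcard : (Finset.univ.erase k0).card = 2 := by
        rw [Finset.card_erase_of_mem (Finset.mem_univ k0)]
        simp
      rw [hcard] at this
      simpa [mul_comm] using this
    omega
  -- assemble
  have h8 : ∀ j, 8 ≤ ∑ k, T.dist SatVtx.s (.cl j k) :=
    fun j => le_trans (by norm_num) (hclparent j 1 (hlit1 j))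
  have h11 : 11 ≤ ∑ k, T.dist SatVtx.s (.cl j0 k) :=
    le_trans (by norm_num) (hclparent j0 2 hlit2)
  have hμ : 1 ≤ μ := j0.pos
  have hcl : 8 * μ + 3 ≤ ∑ j, ∑ k, T.dist SatVtx.s (.cl j k) := by
    rw [← Finset.add_sum_erase _ _ (Finset.mem_univ j0)]
    have hrest : 8 * (μ - 1) ≤ ∑ j ∈ Finset.univ.erase j0, ∑ k, T.dist SatVtx.s (.cl j k) := by
      have := Finset.card_nsmul_le_sum (Finset.univ.erase j0)
        (fun j => ∑ k, T.dist SatVtx.s (.cl j k)) 8 (fun j _ => h8 j)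
      have hcard : (Finset.univ.erase j0).card = μ - 1 := by
        rw [Finset.card_erase_of_mem (Finset.mem_univ j0)]
        simp
      rw [hcard] at this
      simpa [mul_comm] using this
    omega
  have hvars : 3 * η ≤ (∑ i, T.dist SatVtx.s (.pos i)) + ∑ i, T.dist SatVtx.s (.neg i) := by
    rw [← Finset.sum_add_distrib]
    calc 3 * η = ∑ _i : Fin η, 3 := by simp [mul_comm]
    _ ≤ _ := Finset.sum_le_sum fun i _ => hvar3 i
  have h0 : T.dist SatVtx.s SatVtx.s = 0 := SimpleGraph.dist_self
  rw [sum_satVtx (fun v => T.dist SatVtx.s v)]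
  omega
end

section
/- Let φ be a 3-CNF formula with variables x_1,…,x_η and clauses c_1,…,c_μ, let M be a positive integer, and let the weighted graph G'_φ with its clustering and source s be the associated CluSPT instance. If φ is not satisfiable, then every clustered spanning tree T of G'_φ rooted at s satisfies cost(T) ≥ η + M + 4. -/
open SimpleGraph

inductive WVtx (η μ M : ℕ) where
  | s : WVtx η μ M
  | pos : Fin η → WVtx η μ M
  | neg : Fin η → WVtx η μ M
  | cl : Fin μ → Fin 3 → WVtx η μ M
  | r : Fin μ → WVtx η μ M
  | pth : Fin μ → Fin M → WVtx η μ M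
  deriving DecidableEq, Fintype

/-- Base adjacency relation for the CluSPT hardness graph `G'_φ`. -/
def wRel {η μ M : ℕ} (φ : Fin μ → Fin 3 → Fin η × Bool) :
    WVtx η μ M → WVtx η μ M → Prop
  | .s, .pos _ => True
  | .s, .neg _ => True
  | .pos i, .neg i' => i = i'
  | .r j, .cl j' _ => j = j'
  | .r j, .pth j' t => j = j' ∧ (t : ℕ) = 0
  | .pth j t, .pth j' t' => j = j' ∧ (t' : ℕ) = (t : ℕ) + 1
  | .cl j k, .pos i => φ j k = (i, true)
  | .cl j k, .neg i => φ j k = (i, false)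
  | _, _ => False

def wGraph {η μ M : ℕ} (φ : Fin μ → Fin 3 → Fin η × Bool) : SimpleGraph (WVtx η μ M) :=
  SimpleGraph.fromRel (wRel φ)

-- Edge weights: every edge has weight `0` except the edges `(v_i, v̄_i)`,
-- which have weight `1`.
open Classical in
noncomputable def wWt (η μ M : ℕ) : Sym2 (WVtx η μ M) → ℝ :=
  fun e => if ∃ i : Fin η, e = s(WVtx.pos i, WVtx.neg i) then 1 else 0

def wClusters (η μ M : ℕ) : Set (Set (WVtx η μ M)) :=
  {{WVtx.s}} ∪ {S | ∃ i, S = {WVtx.pos i, WVtx.neg i}} ∪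
    {S | ∃ j, S = {x | (∃ k, x = WVtx.cl j k) ∨ x = WVtx.r j ∨ ∃ t, x = WVtx.pth j t}}

/-- The weighted distance between `u` and `v` in `T` with edge weights `w`:
the least total weight of a walk from `u` to `v` (for a tree with nonnegative
weights, this is the total weight of the unique `u`–`v` path). -/
noncomputable def wdist {V : Type*} (T : SimpleGraph V) (w : Sym2 V → ℝ) (u v : V) : ℝ :=
  sInf {x | ∃ p : T.Walk u v, x = (p.edges.map w).sum}



namespace Stmt13Aux

variable {V : Type*}

lemma crossing {H : SimpleGraph V} {S : Set V} :
    ∀ {u v : V} (p : H.Walk u v), u ∈ S → v ∉ S →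
      ∃ a b, a ∈ S ∧ b ∉ S ∧ s(a, b) ∈ p.edges ∧ H.Reachable u a := by
  intro u v p
  induction p with
  | nil => intro hu hv; exact absurd hu hv
  | @cons u x v h q ih =>
    intro hu hv
    by_cases hx : x ∈ S
    · obtain ⟨a, b, ha, hb, he, hr⟩ := ih hx hv
      exact ⟨a, b, ha, hb, by simp [he], h.reachable.trans hr⟩
    · exact ⟨u, x, hu, hx, by simp, Reachable.refl _⟩

lemma adj_of_induce_conn {T : SimpleGraph V} {a b : V} (hab : a ≠ b)
    (h : (T.induce {a, b}).Connected) : T.Adj a b := by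
  obtain ⟨w⟩ := h.preconnected ⟨a, by simp⟩ ⟨b, by simp⟩
  suffices H : ∀ (x y : ({a, b} : Set V)) (_ : (T.induce {a, b}).Walk x y),
      x.val ≠ y.val → T.Adj a b from H _ _ w hab
  intro x y w
  induction w with
  | nil => intro hxy; exact absurd rfl hxy
  | @cons x z y h q ih =>
    intro hxy
    have hT : T.Adj x.val z.val := h
    have hx := x.2
    have hz := z.2
    simp only [Set.mem_insert_iff, Set.mem_singleton_iff] at hx hz
    rcases hx with hx | hx <;> rcases hz with hz | hz
    · exact absurd (hx.trans hz.symm) hT.ne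
    · rw [hx, hz] at hT; exact hT
    · rw [hx, hz] at hT; exact hT.symm
    · exact absurd (hx.trans hz.symm) hT.ne

end Stmt13Aux

section Weights

variable {η μ M : ℕ}

lemma wWt_nonneg (e : Sym2 (WVtx η μ M)) : 0 ≤ wWt η μ M e := by
  unfold wWt; split <;> norm_num

lemma wWt_eq_one (i : Fin η) :
    wWt η μ M s(WVtx.pos i, WVtx.neg i) = 1 := by
  unfold wWt
  rw [if_pos ⟨i, rfl⟩]

lemma wdist_nonneg (T : SimpleGraph (WVtx η μ M)) (u v : WVtx η μ M) :
    0 ≤ wdist T (wWt η μ M) u v := by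
  apply Real.sInf_nonneg
  rintro x ⟨p, rfl⟩
  apply List.sum_nonneg
  intro a ha
  obtain ⟨e, -, rfl⟩ := List.mem_map.mp ha
  exact wWt_nonneg e

lemma cut_lemma (T : SimpleGraph (WVtx η μ M)) (hconn : T.Connected)
    (F : Set (Sym2 (WVtx η μ M))) (hF : ∀ f ∈ F, wWt η μ M f = 1)
    (v : WVtx η μ M) (hv : ¬ (T.deleteEdges F).Reachable WVtx.s v) :
    1 ≤ wdist T (wWt η μ M) WVtx.s v := by
  apply le_csInf
  · obtain ⟨p⟩ := hconn.preconnected WVtx.s v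
    exact ⟨_, p, rfl⟩
  rintro x ⟨p, rfl⟩
  obtain ⟨a, b, ha, hb, he, -⟩ :=
    Stmt13Aux.crossing (S := {x | (T.deleteEdges F).Reachable WVtx.s x}) p
      (Reachable.refl _) hv
  have hadj : T.Adj a b := p.adj_of_mem_edges he
  have hmemF : s(a, b) ∈ F := by
    by_contra hne
    exact hb (ha.trans (SimpleGraph.Adj.reachable (by rw [deleteEdges_adj]; exact ⟨hadj, hne⟩)))
  calc (1 : ℝ) = wWt η μ M s(a, b) := (hF _ hmemF).symm
    _ ≤ _ := by
        refine List.single_le_sum ?_ _ (List.mem_map_of_mem he)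
        intro x hx
        obtain ⟨e, -, rfl⟩ := List.mem_map.mp hx
        exact wWt_nonneg e

end Weights

set_option maxHeartbeats 1600000 in
theorem stmt13 (η μ M : ℕ) (hM : 0 < M) (φ : Fin μ → Fin 3 → Fin η × Bool)
    (hunsat : ¬ ∃ a : Fin η → Bool, ∀ j, ∃ k, a (φ j k).1 = (φ j k).2) :
    ∀ T : SimpleGraph (WVtx η μ M), IsCST (wGraph φ) (wClusters η μ M) T →
      (η : ℝ) + M + 4 ≤ ∑ v, wdist T (wWt η μ M) WVtx.s v := by
  classical
  intro T hT
  obtain ⟨hle, htree, hclus⟩ := hT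
  have hconn := htree.isConnected
  set e : Fin η → Sym2 (WVtx η μ M) := fun i => s(WVtx.pos i, WVtx.neg i) with he
  -- T contains every edge (pos i, neg i)
  have hadj : ∀ i, T.Adj (.pos i) (.neg i) := by
    intro i
    apply Stmt13Aux.adj_of_induce_conn (by simp)
    exact hclus _ (Or.inl (Or.inr ⟨i, rfl⟩))
  -- not both endpoints reachable from s after deleting e i
  have hnotboth : ∀ i, ¬ ((T.deleteEdges {e i}).Reachable WVtx.s (.pos i) ∧
      (T.deleteEdges {e i}).Reachable WVtx.s (.neg i)) := by
    rintro i ⟨h1, h2⟩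
    obtain ⟨w⟩ := h1.symm.trans h2
    obtain ⟨pw, hpw⟩ := w.toPath
    have hsub : ∀ e' ∈ pw.edges, e' ∈ T.edgeSet := fun e' h' =>
      (edgeSet_mono (deleteEdges_le _)) (pw.edges_subset_edgeSet h')
    have hnot : e i ∉ pw.edges := by
      intro hmem
      have := pw.edges_subset_edgeSet hmem
      rw [edgeSet_deleteEdges] at this
      exact this.2 rfl
    have huniq := isAcyclic_iff_path_unique.mp htree.IsAcyclic
      ⟨pw.transfer T hsub, hpw.transfer hsub⟩ (Path.singleton (hadj i))
    have hval : pw.transfer T hsub = (Path.singleton (hadj i)).val :=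
      congrArg Subtype.val huniq
    have hmem : e i ∈ (pw.transfer T hsub).edges := by
      rw [hval]
      exact Path.mk'_mem_edges_singleton (hadj i)
    rw [Walk.edges_transfer] at hmem
    exact hnot hmem
  -- the assignment induced by T
  set a : Fin η → Bool :=
    fun i => if (T.deleteEdges {e i}).Reachable WVtx.s (.pos i) then true else false with ha
  obtain ⟨j, hj⟩ : ∃ j, ∀ k, a (φ j k).1 ≠ (φ j k).2 := by
    by_contra h
    push_neg at h
    exact hunsat ⟨a, h⟩
  -- literal vertices of the violated clause
  set ℓ : Fin 3 → WVtx η μ M :=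
    fun k => if (φ j k).2 then .pos (φ j k).1 else .neg (φ j k).1 with hℓ
  have hlit : ∀ k, ¬ (T.deleteEdges {e (φ j k).1}).Reachable WVtx.s (ℓ k) := by
    intro k
    have hk := hj k
    by_cases hs : (φ j k).2 = true
    · have hfalse : a (φ j k).1 = false := by
        cases hb : a (φ j k).1
        · rfl
        · exact absurd (hb.trans hs.symm) hk
      simp only [ha] at hfalse
      simp only [hℓ, hs, if_true]
      intro hre
      rw [if_pos hre] at hfalse
      exact Bool.noConfusion hfalse
    · have hs' : (φ j k).2 = false := by simpa using hs
      have htrue : a (φ j k).1 = true := by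
        cases hb : a (φ j k).1
        · exact absurd (hb.trans hs'.symm) hk
        · rfl
      simp only [ha] at htrue
      have hpos : (T.deleteEdges {e (φ j k).1}).Reachable WVtx.s (.pos (φ j k).1) := by
        by_contra hcon
        rw [if_neg hcon] at htrue
        exact Bool.noConfusion htrue
      simp only [hℓ, hs', if_false]
      intro hre
      exact hnotboth _ ⟨hpos, hre⟩
  -- the deleted edge set for the violated clause
  set F : Set (Sym2 (WVtx η μ M)) := {f | ∃ k : Fin 3, f = e (φ j k).1} with hF
  have hFwt : ∀ f ∈ F, wWt η μ M f = 1 := by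
    rintro f ⟨k, rfl⟩
    exact wWt_eq_one _
  -- cluster of the violated clause
  set C : Set (WVtx η μ M) :=
    {x | (∃ k, x = WVtx.cl j k) ∨ x = WVtx.r j ∨ ∃ t, x = WVtx.pth j t} with hC
  have hCunreach : ∀ v ∈ C, ¬ (T.deleteEdges F).Reachable WVtx.s v := by
    intro v hv hre
    obtain ⟨p⟩ := hre
    have hsnot : WVtx.s ∈ Cᶜ := by simp [hC]
    obtain ⟨x, y, hx, hy, hmem, hrx⟩ := Stmt13Aux.crossing (S := Cᶜ) p hsnot (not_not.mpr hv)
    have hadjxy : (T.deleteEdges F).Adj x y := p.adj_of_mem_edges hmem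
    have hG : (wGraph φ).Adj x y := hle ((deleteEdges_le _) hadjxy)
    rw [wGraph, fromRel_adj] at hG
    have hyC : y ∈ C := not_not.mp hy
    have hxC : x ∉ C := hx
    have hex : ∃ k : Fin 3, x = ℓ k := by
      rcases hyC with ⟨k, rfl⟩ | rfl | ⟨t, rfl⟩
      · refine ⟨k, ?_⟩
        obtain ⟨-, h | h⟩ := hG
        · rcases x with _ | i | i | ⟨j', k'⟩ | j' | ⟨j', t⟩
          · exact h.elim
          · exact h.elim
          · exact h.elim
          · exact h.elim
          · exact absurd (Or.inr (Or.inl (show WVtx.r j' = WVtx.r j by rw [h]))) hxC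
          · exact h.elim
        · rcases x with _ | i | i | ⟨j', k'⟩ | j' | ⟨j', t⟩
          · exact h.elim
          · have h' : φ j k = (i, true) := h
            simp [hℓ, h']
          · have h' : φ j k = (i, false) := h
            simp [hℓ, h']
          · exact h.elim
          · exact h.elim
          · exact h.elim
      · exfalso
        obtain ⟨-, h | h⟩ := hG
        · rcases x with _ | i | i | ⟨j', k'⟩ | j' | ⟨j', t⟩ <;> exact h.elim
        · rcases x with _ | i | i | ⟨j', k'⟩ | j' | ⟨j', t⟩
          · exact h.elim
          · exact h.elim
          · exact h.elim
          · exact hxC (Or.inl ⟨k', by have h' : j = j' := h; rw [h']⟩)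
          · exact h.elim
          · exact hxC (Or.inr (Or.inr ⟨t, by have h' : j = j' ∧ (t:ℕ) = 0 := h; rw [h'.1]⟩))
      · exfalso
        obtain ⟨-, h | h⟩ := hG
        · rcases x with _ | i | i | ⟨j', k'⟩ | j' | ⟨j', t'⟩
          · exact h.elim
          · exact h.elim
          · exact h.elim
          · exact h.elim
          · exact hxC (Or.inr (Or.inl (by have h' : j' = j ∧ True := ⟨h.1, trivial⟩; rw [h'.1])))
          · exact hxC (Or.inr (Or.inr ⟨t', by have h' : j' = j := h.1; rw [h']⟩))
        · rcases x with _ | i | i | ⟨j', k'⟩ | j' | ⟨j', t'⟩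
          · exact h.elim
          · exact h.elim
          · exact h.elim
          · exact h.elim
          · exact h.elim
          · exact hxC (Or.inr (Or.inr ⟨t', by have h' : j = j' := h.1; rw [h']⟩))
    obtain ⟨k, rfl⟩ := hex
    have : (T.deleteEdges {e (φ j k).1}).Reachable WVtx.s (ℓ k) :=
      hrx.mono (deleteEdges_anti (by rintro f rfl; exact ⟨k, rfl⟩))
    exact hlit k this
  -- the vertex of the variable cluster on the far side
  set b : Fin η → WVtx η μ M :=
    fun i => if (T.deleteEdges {e i}).Reachable WVtx.s (.pos i) then .neg i else .pos i with hb
  have hbspec : ∀ i, b i = .pos i ∨ b i = .neg i := by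
    intro i
    by_cases h : (T.deleteEdges {e i}).Reachable WVtx.s (.pos i)
    · right; simp only [hb, h, if_true]
    · left; simp only [hb, h, if_false]
  have hbdist : ∀ i, 1 ≤ wdist T (wWt η μ M) WVtx.s (b i) := by
    intro i
    apply cut_lemma T hconn {e i} (by rintro f rfl; exact wWt_eq_one i)
    by_cases h : (T.deleteEdges {e i}).Reachable WVtx.s (.pos i)
    · simp only [hb, h, if_true]
      intro h2
      exact hnotboth i ⟨h, h2⟩
    · simp only [hb, h, if_false]
      exact id
  have hCdist : ∀ v ∈ C, 1 ≤ wdist T (wWt η μ M) WVtx.s v := fun v hv =>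
    cut_lemma T hconn F hFwt v (hCunreach v hv)
  -- the injection enumerating η + M + 4 heavy vertices
  set f : Fin η ⊕ Fin 3 ⊕ Unit ⊕ Fin M → WVtx η μ M :=
    Sum.elim b (Sum.elim (fun k => WVtx.cl j k)
      (Sum.elim (fun _ => WVtx.r j) (fun t => WVtx.pth j t))) with hf
  have hfinj : Function.Injective f := by
    rintro (i | k | u | t) (i' | k' | u' | t') hxy <;>
      simp only [hf, Sum.elim_inl, Sum.elim_inr] at hxy <;>
      first
      | rfl
      | (rcases hbspec i with h | h <;> rcases hbspec i' with h' | h' <;>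
          rw [h, h'] at hxy <;> simp_all)
      | (rcases hbspec i with h | h <;> rw [h] at hxy <;> simp_all)
      | (rcases hbspec i' with h' | h' <;> rw [h'] at hxy <;> simp_all)
      | simp_all
  have hfdist : ∀ x, 1 ≤ wdist T (wWt η μ M) WVtx.s (f x) := by
    rintro (i | k | u | t) <;> simp only [hf, Sum.elim_inl, Sum.elim_inr]
    · exact hbdist i
    · exact hCdist _ (Or.inl ⟨k, rfl⟩)
    · exact hCdist _ (Or.inr (Or.inl rfl))
    · exact hCdist _ (Or.inr (Or.inr ⟨t, rfl⟩))
  calc (η : ℝ) + M + 4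
      = (Fintype.card (Fin η ⊕ Fin 3 ⊕ Unit ⊕ Fin M) : ℝ) := by
        simp [Fintype.card_sum]
        ring
    _ = ∑ _x : Fin η ⊕ Fin 3 ⊕ Unit ⊕ Fin M, (1 : ℝ) := by
        simp
    _ ≤ ∑ x : Fin η ⊕ Fin 3 ⊕ Unit ⊕ Fin M, wdist T (wWt η μ M) WVtx.s (f x) :=
        Finset.sum_le_sum fun x _ => hfdist x
    _ = ∑ v ∈ Finset.univ.image f, wdist T (wWt η μ M) WVtx.s v := by
        rw [Finset.sum_image (fun x _ y _ h => hfinj h)]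
    _ ≤ ∑ v, wdist T (wWt η μ M) WVtx.s v := by
        apply Finset.sum_le_sum_of_subset_of_nonneg (Finset.subset_univ _)
        intro v _ _
        exact wdist_nonneg T _ v
end
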